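/- For every integer t ≥ 1, the number of partitions of the rectangle R(2,3t+1) into 2t L-trominoes and exactly one horizontal domino equals t·2^t. -/

import Mathlib

abbrev Cell : Type := ℤ × ℤ

/-- The m×n rectangle of cells (i,j), 1 ≤ i ≤ m (row), 1 ≤ j ≤ n (column). -/
def rect (m n : ℤ) : Set Cell :=
  {c : Cell | 1 ≤ c.1 ∧ c.1 ≤ m ∧ 1 ≤ c.2 ∧ c.2 ≤ n}

/-- An L-tromino: a 2×2 block minus one of its cells. -/
def IsTromino (T : Set Cell) : Prop :=
  ∃ i j : ℤ, ∃ c : Cell,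
    c ∈ ({(i, j), (i + 1, j), (i, j + 1), (i + 1, j + 1)} : Set Cell) ∧
    T = ({(i, j), (i + 1, j), (i, j + 1), (i + 1, j + 1)} : Set Cell) \ {c}

def IsHDomino (D : Set Cell) : Prop := ∃ i j : ℤ, D = {(i, j), (i, j + 1)}

def IsVDomino (D : Set Cell) : Prop := ∃ i j : ℤ, D = {(i, j), (i + 1, j)}

def IsDomino (D : Set Cell) : Prop := IsHDomino D ∨ IsVDomino D

/-- A partition of `S` into L-trominoes, identified with its set of pieces. -/
def IsTromTiling (P : Set (Set Cell)) (S : Set Cell) : Prop :=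
  (∀ p ∈ P, IsTromino p) ∧ P.PairwiseDisjoint id ∧ ⋃₀ P = S

def Tileable (S : Set Cell) : Prop := ∃ P, IsTromTiling P S

/-- A partition of `S` into dominoes, identified with its set of pieces. -/
def IsDominoTiling (P : Set (Set Cell)) (S : Set Cell) : Prop :=
  (∀ p ∈ P, IsDomino p) ∧ P.PairwiseDisjoint id ∧ ⋃₀ P = S

/-- A partition of `S` into `k` L-trominoes and exactly one piece satisfying `dom`. -/
def IsMixedTiling (P : Set (Set Cell)) (S : Set Cell)
    (dom : Set Cell → Prop) (k : ℕ) : Prop :=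
  P.PairwiseDisjoint id ∧ ⋃₀ P = S ∧
  (∀ p ∈ P, IsTromino p ∨ dom p) ∧
  {p ∈ P | dom p}.ncard = 1 ∧ {p ∈ P | IsTromino p}.ncard = k

set_option linter.unreachableTactic false
set_option linter.unusedTactic false
set_option linter.unnecessarySeqFocus false
set_option linter.unusedVariables false
set_option maxHeartbeats 1000000

def blk (i j : ℤ) : Set Cell := {(i, j), (i + 1, j), (i, j + 1), (i + 1, j + 1)}

lemma isTromino_iff {q : Set Cell} :
    IsTromino q ↔ ∃ i j : ℤ, ∃ c : Cell, c ∈ blk i j ∧ q = blk i j \ {c} := Iff.rfl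

def l1 (a : ℤ) : Set Cell := {(1,a),(2,a),(1,a+1)}
def l2 (a : ℤ) : Set Cell := {(1,a),(2,a),(2,a+1)}
def l3 (a : ℤ) : Set Cell := {(1,a),(1,a+1),(2,a+1)}
def l4 (a : ℤ) : Set Cell := {(2,a),(1,a+1),(2,a+1)}
def h1 (a : ℤ) : Set Cell := {(1,a),(1,a+1)}
def h2 (a : ℤ) : Set Cell := {(2,a),(2,a+1)}

lemma blk_row_wits {i j : ℤ} {c : Cell} (hc : c ∈ blk i j) :
    (∃ y, (i, y) ∈ blk i j \ {c}) ∧ (∃ y, (i + 1, y) ∈ blk i j \ {c}) := by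
  obtain ⟨c1, c2⟩ := c
  simp only [blk, Set.mem_diff, Set.mem_insert_iff, Set.mem_singleton_iff,
    Prod.mk.injEq] at hc
  constructor
  · by_cases h : c1 = i ∧ c2 = j
    · exact ⟨j + 1, by simp [blk, Prod.ext_iff] <;> omega⟩
    · exact ⟨j, by simp [blk, Prod.ext_iff] <;> omega⟩
  · by_cases h : c1 = i + 1 ∧ c2 = j
    · exact ⟨j + 1, by simp [blk, Prod.ext_iff] <;> omega⟩
    · exact ⟨j, by simp [blk, Prod.ext_iff] <;> omega⟩

lemma blk_col_wit {j : ℤ} {c : Cell} (hc : c ∈ blk 1 j) :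
    ((1:ℤ), j) ∈ blk 1 j \ {c} ∨ ((2:ℤ), j) ∈ blk 1 j \ {c} := by
  obtain ⟨c1, c2⟩ := c
  simp only [blk, Set.mem_insert_iff, Set.mem_singleton_iff, Prod.mk.injEq] at hc
  by_cases h : c1 = 1 ∧ c2 = j
  · right; simp [blk, Prod.ext_iff] <;> omega
  · left; simp [blk, Prod.ext_iff] <;> omega

lemma trom_anchor {q : Set Cell} (hq : IsTromino q)
    (hb : ∀ c ∈ q, 1 ≤ c.1 ∧ c.1 ≤ 2) :
    ∃ j : ℤ, ∃ c : Cell, c ∈ blk 1 j ∧ q = blk 1 j \ {c} := by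
  obtain ⟨i, j, c, hc, rfl⟩ := isTromino_iff.mp hq
  obtain ⟨⟨y, hy⟩, ⟨y', hy'⟩⟩ := blk_row_wits hc
  have h1 := hb _ hy
  have h2 := hb _ hy'
  simp only at h1 h2
  have : i = 1 := by omega
  subst this
  exact ⟨j, c, hc, rfl⟩

lemma mem_blk_cases {j : ℤ} {c : Cell} (hc : c ∈ blk 1 j) :
    c = ((1:ℤ), j) ∨ c = ((2:ℤ), j) ∨ c = ((1:ℤ), j + 1) ∨ c = ((2:ℤ), j + 1) := by
  simpa only [blk, Set.mem_insert_iff, Set.mem_singleton_iff,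
    show (1:ℤ)+1 = 2 by rfl] using hc

lemma step_first {q : Set Cell} {a : ℤ} (hq : IsTromino q ∨ IsHDomino q)
    (hb : ∀ c ∈ q, 1 ≤ c.1 ∧ c.1 ≤ 2 ∧ a ≤ c.2)
    (hm : ((1:ℤ), a) ∈ q) :
    q = l1 a ∨ q = l2 a ∨ q = l3 a ∨ q = h1 a := by
  rcases hq with hq | ⟨i, j, rfl⟩
  · obtain ⟨j, c, hc, rfl⟩ := trom_anchor hq (fun c hc => ⟨(hb c hc).1, (hb c hc).2.1⟩)
    have hj : j = a ∨ j = a - 1 := by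
      have := hm.1
      simp only [blk, Set.mem_insert_iff, Set.mem_singleton_iff, Prod.mk.injEq] at this
      omega
    rcases hj with hj | hj
    · rcases mem_blk_cases hc with rfl | rfl | rfl | rfl
      · exact absurd (by simp [Prod.ext_iff] <;> omega) hm.2
      · refine Or.inr (Or.inr (Or.inl ?_))
        ext ⟨x, y⟩; simp [blk, l3, Prod.ext_iff] <;> omega
      · refine Or.inr (Or.inl ?_)
        ext ⟨x, y⟩; simp [blk, l2, Prod.ext_iff] <;> omega
      · refine Or.inl ?_
        ext ⟨x, y⟩; simp [blk, l1, Prod.ext_iff] <;> omega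
    · exfalso
      subst hj
      rcases blk_col_wit hc with hw | hw
      · have := (hb _ hw).2.2; simp only at this; omega
      · have := (hb _ hw).2.2; simp only at this; omega
  · simp only [Set.mem_insert_iff, Set.mem_singleton_iff, Prod.mk.injEq] at hm
    have hij : i = 1 ∧ (j = a ∨ j = a - 1) := by omega
    obtain ⟨hi, hj | hj⟩ := hij
    · refine Or.inr (Or.inr (Or.inr ?_))
      ext ⟨x, y⟩; simp [h1, Prod.ext_iff] <;> omega
    · exfalso
      have hmem : ((1:ℤ), a - 1) ∈ ({((i:ℤ), j), ((i:ℤ), j + 1)} : Set Cell) := by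
        simp [Prod.ext_iff] <;> omega
      have := (hb _ hmem).2.2
      simp only at this; omega

lemma step_top {q : Set Cell} {b : ℤ} (hq : IsTromino q ∨ IsHDomino q)
    (hb : ∀ c ∈ q, 1 ≤ c.1 ∧ c.1 ≤ 2)
    (hm : ((1:ℤ), b) ∈ q)
    (f1 : ((1:ℤ), b - 1) ∉ q) (f2 : ((2:ℤ), b - 1) ∉ q) (f3 : ((2:ℤ), b) ∉ q) :
    q = l3 b ∨ q = h1 b := by
  rcases hq with hq | ⟨i, j, rfl⟩
  · obtain ⟨j, c, hc, rfl⟩ := trom_anchor hq hb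
    have hj : j = b ∨ j = b - 1 := by
      have := hm.1
      simp only [blk, Set.mem_insert_iff, Set.mem_singleton_iff, Prod.mk.injEq] at this
      omega
    rcases hj with hj | hj
    · rcases mem_blk_cases hc with rfl | rfl | rfl | rfl
      · exact absurd (by simp [Prod.ext_iff] <;> omega) hm.2
      · refine Or.inl ?_
        ext ⟨x, y⟩; simp [blk, l3, Prod.ext_iff] <;> omega
      · exact absurd (by simp [blk, Prod.ext_iff] <;> omega) f3
      · exact absurd (by simp [blk, Prod.ext_iff] <;> omega) f3
    · exfalso
      subst hj
      rcases blk_col_wit hc with hw | hw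
      · exact f1 hw
      · exact f2 hw
  · simp only [Set.mem_insert_iff, Set.mem_singleton_iff, Prod.mk.injEq] at hm
    have hij : i = 1 ∧ (j = b ∨ j = b - 1) := by omega
    obtain ⟨hi, hj | hj⟩ := hij
    · refine Or.inr ?_
      ext ⟨x, y⟩; simp [h1, Prod.ext_iff] <;> omega
    · exact absurd (by simp [Prod.ext_iff] <;> omega :
        ((1:ℤ), b - 1) ∈ ({((i:ℤ), j), ((i:ℤ), j + 1)} : Set Cell)) f1

lemma step_bot {q : Set Cell} {b : ℤ} (hq : IsTromino q ∨ IsHDomino q)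
    (hb : ∀ c ∈ q, 1 ≤ c.1 ∧ c.1 ≤ 2)
    (hm : ((2:ℤ), b) ∈ q)
    (f1 : ((1:ℤ), b - 1) ∉ q) (f2 : ((2:ℤ), b - 1) ∉ q) (f3 : ((1:ℤ), b) ∉ q) :
    q = l4 b ∨ q = h2 b := by
  rcases hq with hq | ⟨i, j, rfl⟩
  · obtain ⟨j, c, hc, rfl⟩ := trom_anchor hq hb
    have hj : j = b ∨ j = b - 1 := by
      have := hm.1
      simp only [blk, Set.mem_insert_iff, Set.mem_singleton_iff, Prod.mk.injEq] at this
      omega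
    rcases hj with hj | hj
    · rcases mem_blk_cases hc with rfl | rfl | rfl | rfl
      · refine Or.inl ?_
        ext ⟨x, y⟩; simp [blk, l4, Prod.ext_iff] <;> omega
      · exact absurd (by simp [Prod.ext_iff] <;> omega) hm.2
      · exact absurd (by simp [blk, Prod.ext_iff] <;> omega) f3
      · exact absurd (by simp [blk, Prod.ext_iff] <;> omega) f3
    · exfalso
      subst hj
      rcases blk_col_wit hc with hw | hw
      · exact f1 hw
      · exact f2 hw
  · simp only [Set.mem_insert_iff, Set.mem_singleton_iff, Prod.mk.injEq] at hm
    have hij : i = 2 ∧ (j = b ∨ j = b - 1) := by omega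
    obtain ⟨hi, hj | hj⟩ := hij
    · refine Or.inr ?_
      ext ⟨x, y⟩; simp [h2, Prod.ext_iff] <;> omega
    · exact absurd (by simp [Prod.ext_iff] <;> omega :
        ((2:ℤ), b - 1) ∈ ({((i:ℤ), j), ((i:ℤ), j + 1)} : Set Cell)) f2
def strip (a n : ℤ) : Set Cell := {c : Cell | 1 ≤ c.1 ∧ c.1 ≤ 2 ∧ a ≤ c.2 ∧ c.2 ≤ a + n - 1}

lemma trom_l1 (a : ℤ) : IsTromino (l1 a) := by
  refine ⟨1, a, (2, a+1), by simp, ?_⟩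
  ext ⟨x,y⟩; simp [l1, Prod.ext_iff] <;> omega

lemma trom_l2 (a : ℤ) : IsTromino (l2 a) := by
  refine ⟨1, a, (1, a+1), by simp, ?_⟩
  ext ⟨x,y⟩; simp [l2, Prod.ext_iff] <;> omega

lemma trom_l3 (a : ℤ) : IsTromino (l3 a) := by
  refine ⟨1, a, (2, a), by simp, ?_⟩
  ext ⟨x,y⟩; simp [l3, Prod.ext_iff] <;> omega

lemma trom_l4 (a : ℤ) : IsTromino (l4 a) := by
  refine ⟨1, a, (1, a), by simp, ?_⟩
  ext ⟨x,y⟩; simp [l4, Prod.ext_iff] <;> omega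

lemma hdom_h1 (a : ℤ) : IsHDomino (h1 a) := ⟨1, a, rfl⟩
lemma hdom_h2 (a : ℤ) : IsHDomino (h2 a) := ⟨2, a, rfl⟩

lemma trom_pair {p : Set Cell} (hp : IsTromino p) :
    ∃ x y : ℤ, (x, y) ∈ p ∧ (x + 1, y) ∈ p := by
  obtain ⟨i, j, c, hc, rfl⟩ := isTromino_iff.mp hp
  obtain ⟨c1, c2⟩ := c
  simp only [blk, Set.mem_insert_iff, Set.mem_singleton_iff, Prod.mk.injEq] at hc
  by_cases h : c1 = i ∧ c2 = j
  · exact ⟨i, j + 1, by simp [blk, Prod.ext_iff] <;> omega, by simp [blk, Prod.ext_iff] <;> omega⟩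
  · by_cases h' : (c1 = i ∨ c1 = i + 1) ∧ c2 = j
    · exact ⟨i, j + 1, by simp [blk, Prod.ext_iff] <;> omega,
        by simp [blk, Prod.ext_iff] <;> omega⟩
    · exact ⟨i, j, by simp [blk, Prod.ext_iff] <;> omega, by simp [blk, Prod.ext_iff] <;> omega⟩

lemma hdom_not_trom {p : Set Cell} (hd : IsHDomino p) : ¬ IsTromino p := by
  intro ht
  obtain ⟨x, y, hx, hx'⟩ := trom_pair ht
  obtain ⟨i, j, rfl⟩ := hd
  simp only [Set.mem_insert_iff, Set.mem_singleton_iff, Prod.mk.injEq] at hx hx'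
  omega

lemma piece_sub {P : Set (Set Cell)} {S : Set Cell} (hu : ⋃₀ P = S) {p} (hp : p ∈ P) :
    p ⊆ S := hu ▸ Set.subset_sUnion_of_mem hp

lemma pd_ne {P : Set (Set Cell)} (hd : P.PairwiseDisjoint id) {p q} (hp : p ∈ P)
    (hq : q ∈ P) (hne : p ≠ q) {c : Cell} (hc : c ∈ p) : c ∉ q :=
  fun hcq => Set.disjoint_left.mp (hd hp hq hne) hc hcq

lemma sdiff_tiling {P B : Set (Set Cell)} {S S' : Set Cell} (hd : P.PairwiseDisjoint id)
    (hu : ⋃₀ P = S) (hB : B ⊆ P) (hBu : ⋃₀ B = S') : ⋃₀ (P \ B) = S \ S' := by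
  ext x
  constructor
  · rintro ⟨p, ⟨hpP, hpB⟩, hxp⟩
    refine ⟨(piece_sub hu hpP) hxp, fun hxS' => ?_⟩
    rw [← hBu] at hxS'
    obtain ⟨q, hqB, hxq⟩ := hxS'
    exact pd_ne hd hpP (hB hqB) (fun he => hpB (he ▸ hqB)) hxp hxq
  · rintro ⟨hxS, hxS'⟩
    rw [← hu] at hxS
    obtain ⟨p, hpP, hxp⟩ := hxS
    refine ⟨p, ⟨hpP, fun hpB => hxS' ?_⟩, hxp⟩
    rw [← hBu]
    exact ⟨p, hpB, hxp⟩

lemma union_eq_cancel {B Q Q' : Set (Set Cell)} (h : B ∪ Q = B ∪ Q')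
    (hQ : ∀ p ∈ Q, p ∉ B) (hQ' : ∀ p ∈ Q', p ∉ B) : Q = Q' := by
  ext p
  constructor
  · intro hp
    have : p ∈ B ∪ Q' := h ▸ (Set.mem_union_right _ hp)
    rcases this with hB | h'
    · exact absurd hB (hQ p hp)
    · exact h'
  · intro hp
    have : p ∈ B ∪ Q := h ▸ (Set.mem_union_right _ hp)
    rcases this with hB | h'
    · exact absurd hB (hQ' p hp)
    · exact h'

def blockT (a : ℤ) (b : Fin 2) : Set (Set Cell) :=
  if b = 0 then {l1 a, l4 (a+1)} else {l2 a, l3 (a+1)}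

def blockM (a : ℤ) (b : Fin 2) : Set (Set Cell) :=
  if b = 0 then {l2 a, h1 (a+1), l4 (a+2)} else {l1 a, h2 (a+1), l3 (a+2)}

lemma blockT_sUnion (a : ℤ) (b : Fin 2) : ⋃₀ blockT a b = strip a 3 := by
  fin_cases b <;>
  · simp only [blockT, if_true, if_false, reduceIte, Set.sUnion_insert, Set.sUnion_singleton]
    ext ⟨x, y⟩
    simp [l1, l2, l3, l4, strip, Prod.ext_iff] <;> omega

lemma blockM_sUnion (a : ℤ) (b : Fin 2) : ⋃₀ blockM a b = strip a 4 := by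
  fin_cases b <;>
  · simp only [blockM, if_true, if_false, reduceIte, Set.sUnion_insert, Set.sUnion_singleton]
    ext ⟨x, y⟩
    simp [l1, l2, l3, l4, h1, h2, strip, Prod.ext_iff] <;> omega

lemma strip_sdiff (a n m : ℤ) (hm : 0 ≤ m) : strip a n \ strip a m = strip (a+m) (n-m) := by
  ext ⟨x, y⟩; simp [strip] <;> omega

lemma tt_peel {a n : ℤ} {P : Set (Set Cell)} (hn : 3 ≤ n)
    (h : IsTromTiling P (strip a n)) :
    ∃ b : Fin 2, blockT a b ⊆ P ∧ IsTromTiling (P \ blockT a b) (strip (a+3) (n-3)) := by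
  obtain ⟨hT, hd, hu⟩ := h
  have hsub : ∀ p ∈ P, ∀ c ∈ p, c ∈ strip a n := fun p hp c hc => (piece_sub hu hp) hc
  have hget : ∀ c ∈ strip a n, ∃ p ∈ P, c ∈ p := fun c hc => by rw [← hu] at hc; exact hc
  have hrows : ∀ p ∈ P, ∀ c ∈ p, (1:ℤ) ≤ c.1 ∧ c.1 ≤ 2 := by
    intro p hp c hc; have := hsub p hp c hc; simp [strip] at this; exact ⟨this.1, this.2.1⟩
  have hbnd : ∀ p ∈ P, ∀ c ∈ p, (1:ℤ) ≤ c.1 ∧ c.1 ≤ 2 ∧ a ≤ c.2 := by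
    intro p hp c hc; have := hsub p hp c hc; simp [strip] at this
    exact ⟨this.1, this.2.1, this.2.2.1⟩
  obtain ⟨p1, hp1, hm1⟩ := hget ((1:ℤ), a) (by simp [strip]; omega)
  rcases step_first (Or.inl (hT _ hp1)) (hbnd _ hp1) hm1 with e | e | e | e
  · -- p1 = l1 a ; second piece at (2, a+1)
    subst e
    obtain ⟨p2, hp2, hm2⟩ := hget ((2:ℤ), a+1) (by simp [strip]; omega)
    have hne : l1 a ≠ p2 := by
      intro he; rw [← he] at hm2
      simp only [l1, Set.mem_insert_iff, Set.mem_singleton_iff, Prod.mk.injEq] at hm2; omega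
    have f1 : ((1:ℤ), a+1-1) ∉ p2 := by
      rw [show a+1-1 = a by ring]; exact pd_ne hd hp1 hp2 hne (by simp [l1])
    have f2 : ((2:ℤ), a+1-1) ∉ p2 := by
      rw [show a+1-1 = a by ring]; exact pd_ne hd hp1 hp2 hne (by simp [l1])
    have f3 : ((1:ℤ), a+1) ∉ p2 := pd_ne hd hp1 hp2 hne (by simp [l1])
    rcases step_bot (Or.inl (hT _ hp2)) (hrows _ hp2) hm2 f1 f2 f3 with e2 | e2
    · subst e2
      refine ⟨0, ?_, ?_, hd.subset Set.diff_subset, ?_⟩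
      · simp only [blockT, reduceIte]
        exact Set.insert_subset hp1 (Set.singleton_subset_iff.mpr hp2)
      · exact fun p hp => hT p hp.1
      · rw [sdiff_tiling hd hu ?_ (blockT_sUnion a 0), strip_sdiff a n 3 (by norm_num)]
        simp only [blockT, reduceIte]
        exact Set.insert_subset hp1 (Set.singleton_subset_iff.mpr hp2)
    · exact absurd (hT _ hp2) (e2 ▸ hdom_not_trom (hdom_h2 (a+1)))
  · -- p1 = l2 a ; second piece at (1, a+1)
    subst e
    obtain ⟨p2, hp2, hm2⟩ := hget ((1:ℤ), a+1) (by simp [strip]; omega)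
    have hne : l2 a ≠ p2 := by
      intro he; rw [← he] at hm2
      simp only [l2, Set.mem_insert_iff, Set.mem_singleton_iff, Prod.mk.injEq] at hm2; omega
    have f1 : ((1:ℤ), a+1-1) ∉ p2 := by
      rw [show a+1-1 = a by ring]; exact pd_ne hd hp1 hp2 hne (by simp [l2])
    have f2 : ((2:ℤ), a+1-1) ∉ p2 := by
      rw [show a+1-1 = a by ring]; exact pd_ne hd hp1 hp2 hne (by simp [l2])
    have f3 : ((2:ℤ), a+1) ∉ p2 := pd_ne hd hp1 hp2 hne (by simp [l2])
    rcases step_top (Or.inl (hT _ hp2)) (hrows _ hp2) hm2 f1 f2 f3 with e2 | e2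
    · subst e2
      refine ⟨1, ?_, ?_, hd.subset Set.diff_subset, ?_⟩
      · simp only [blockT, reduceIte]
        exact Set.insert_subset hp1 (Set.singleton_subset_iff.mpr hp2)
      · exact fun p hp => hT p hp.1
      · rw [sdiff_tiling hd hu ?_ (blockT_sUnion a 1), strip_sdiff a n 3 (by norm_num)]
        simp only [blockT, reduceIte]
        exact Set.insert_subset hp1 (Set.singleton_subset_iff.mpr hp2)
    · exact absurd (hT _ hp2) (e2 ▸ hdom_not_trom (hdom_h1 (a+1)))
  · -- p1 = l3 a : impossible
    exfalso
    subst e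
    obtain ⟨p2, hp2, hm2⟩ := hget ((2:ℤ), a) (by simp [strip]; omega)
    have hne : l3 a ≠ p2 := by
      intro he; rw [← he] at hm2
      simp only [l3, Set.mem_insert_iff, Set.mem_singleton_iff, Prod.mk.injEq] at hm2; omega
    have f1 : ((1:ℤ), a-1) ∉ p2 := by
      intro hc; have := hsub _ hp2 _ hc; simp [strip] at this <;> omega
    have f2 : ((2:ℤ), a-1) ∉ p2 := by
      intro hc; have := hsub _ hp2 _ hc; simp [strip] at this <;> omega
    have f3 : ((1:ℤ), a) ∉ p2 := pd_ne hd hp1 hp2 hne (by simp [l3])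
    rcases step_bot (Or.inl (hT _ hp2)) (hrows _ hp2) hm2 f1 f2 f3 with e2 | e2
    · exact pd_ne hd hp1 hp2 hne (by simp [l3] : ((1:ℤ),a+1) ∈ l3 a)
        (by rw [e2]; simp [l4])
    · exact pd_ne hd hp1 hp2 hne (by simp [l3] : ((2:ℤ),a+1) ∈ l3 a)
        (by rw [e2]; simp [h2])
  · -- p1 = h1 a : impossible in a tromino tiling
    exact absurd (hT _ hp1) (e ▸ hdom_not_trom (hdom_h1 a))

lemma ne_piece {S T : Set Cell} (c : Cell) (h1 : c ∈ S) (h2 : c ∉ T) : S ≠ T :=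
  fun h => h2 (h ▸ h1)

lemma dom_unique {P : Set (Set Cell)} (hdom1 : {p ∈ P | IsHDomino p}.ncard = 1)
    {p q : Set Cell} (hp : p ∈ P) (hdp : IsHDomino p) (hq : q ∈ P) (hdq : IsHDomino q) :
    p = q := by
  obtain ⟨x, hx⟩ := Set.ncard_eq_one.mp hdom1
  have h1 : p ∈ {p ∈ P | IsHDomino p} := ⟨hp, hdp⟩
  have h2 : q ∈ {p ∈ P | IsHDomino p} := ⟨hq, hdq⟩
  rw [hx] at h1 h2
  simp only [Set.mem_singleton_iff] at h1 h2
  rw [h1, h2]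

lemma mt_peel {a n : ℤ} {P : Set (Set Cell)} (hn : 4 ≤ n) (hd : P.PairwiseDisjoint id)
    (hu : ⋃₀ P = strip a n) (hshape : ∀ p ∈ P, IsTromino p ∨ IsHDomino p)
    (hdom1 : {p ∈ P | IsHDomino p}.ncard = 1) :
    (∃ b : Fin 2, blockT a b ⊆ P) ∨ (∃ b : Fin 2, blockM a b ⊆ P) := by
  have hsub : ∀ p ∈ P, ∀ c ∈ p, c ∈ strip a n := fun p hp c hc => (piece_sub hu hp) hc
  have hget : ∀ c ∈ strip a n, ∃ p ∈ P, c ∈ p := fun c hc => by rw [← hu] at hc; exact hc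
  have hrows : ∀ p ∈ P, ∀ c ∈ p, (1:ℤ) ≤ c.1 ∧ c.1 ≤ 2 := by
    intro p hp c hc; have := hsub p hp c hc; simp [strip] at this; exact ⟨this.1, this.2.1⟩
  have hbnd : ∀ p ∈ P, ∀ c ∈ p, (1:ℤ) ≤ c.1 ∧ c.1 ≤ 2 ∧ a ≤ c.2 := by
    intro p hp c hc; have := hsub p hp c hc; simp [strip] at this
    exact ⟨this.1, this.2.1, this.2.2.1⟩
  obtain ⟨p1, hp1, hm1⟩ := hget ((1:ℤ), a) (by simp [strip]; omega)
  rcases step_first (hshape _ hp1) (hbnd _ hp1) hm1 with e | e | e | e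
  · -- p1 = l1 a
    subst e
    obtain ⟨p2, hp2, hm2⟩ := hget ((2:ℤ), a+1) (by simp [strip]; omega)
    have hne : l1 a ≠ p2 := by
      intro he; rw [← he] at hm2
      simp only [l1, Set.mem_insert_iff, Set.mem_singleton_iff, Prod.mk.injEq] at hm2; omega
    have f1 : ((1:ℤ), a+1-1) ∉ p2 := by
      rw [show a+1-1 = a by ring]; exact pd_ne hd hp1 hp2 hne (by simp [l1])
    have f2 : ((2:ℤ), a+1-1) ∉ p2 := by
      rw [show a+1-1 = a by ring]; exact pd_ne hd hp1 hp2 hne (by simp [l1])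
    have f3 : ((1:ℤ), a+1) ∉ p2 := pd_ne hd hp1 hp2 hne (by simp [l1])
    rcases step_bot (hshape _ hp2) (hrows _ hp2) hm2 f1 f2 f3 with e2 | e2
    · subst e2
      refine Or.inl ⟨0, ?_⟩
      simp only [blockT, reduceIte]
      exact Set.insert_subset hp1 (Set.singleton_subset_iff.mpr hp2)
    · -- p2 = h2 (a+1), third piece at (1, a+2)
      subst e2
      obtain ⟨p3, hp3, hm3⟩ := hget ((1:ℤ), a+2) (by simp [strip]; omega)
      have hne13 : l1 a ≠ p3 := by
        intro he; rw [← he] at hm3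
        simp only [l1, Set.mem_insert_iff, Set.mem_singleton_iff, Prod.mk.injEq] at hm3; omega
      have hne23 : h2 (a+1) ≠ p3 := by
        intro he; rw [← he] at hm3
        simp only [h2, Set.mem_insert_iff, Set.mem_singleton_iff, Prod.mk.injEq] at hm3; omega
      have f1 : ((1:ℤ), a+2-1) ∉ p3 := by
        rw [show a+2-1 = a+1 by ring]; exact pd_ne hd hp1 hp3 hne13 (by simp [l1])
      have f2 : ((2:ℤ), a+2-1) ∉ p3 := by
        rw [show a+2-1 = a+1 by ring]; exact pd_ne hd hp2 hp3 hne23 (by simp [h2])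
      have f3 : ((2:ℤ), a+2) ∉ p3 := pd_ne hd hp2 hp3 hne23 (by simp [h2]; omega)
      rcases step_top (hshape _ hp3) (hrows _ hp3) hm3 f1 f2 f3 with e3 | e3
      · subst e3
        refine Or.inr ⟨1, ?_⟩
        simp only [blockM, reduceIte]
        exact Set.insert_subset hp1 (Set.insert_subset hp2
          (Set.singleton_subset_iff.mpr hp3))
      · -- second domino: contradiction
        exfalso
        subst e3
        have := dom_unique hdom1 hp2 (hdom_h2 (a+1)) hp3 (hdom_h1 (a+2))
        exact (ne_piece ((2:ℤ),a+1) (by simp [h2]) (by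
          simp only [h1, Set.mem_insert_iff, Set.mem_singleton_iff, Prod.mk.injEq]
          omega)) this
  · -- p1 = l2 a
    subst e
    obtain ⟨p2, hp2, hm2⟩ := hget ((1:ℤ), a+1) (by simp [strip]; omega)
    have hne : l2 a ≠ p2 := by
      intro he; rw [← he] at hm2
      simp only [l2, Set.mem_insert_iff, Set.mem_singleton_iff, Prod.mk.injEq] at hm2; omega
    have f1 : ((1:ℤ), a+1-1) ∉ p2 := by
      rw [show a+1-1 = a by ring]; exact pd_ne hd hp1 hp2 hne (by simp [l2])
    have f2 : ((2:ℤ), a+1-1) ∉ p2 := by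
      rw [show a+1-1 = a by ring]; exact pd_ne hd hp1 hp2 hne (by simp [l2])
    have f3 : ((2:ℤ), a+1) ∉ p2 := pd_ne hd hp1 hp2 hne (by simp [l2])
    rcases step_top (hshape _ hp2) (hrows _ hp2) hm2 f1 f2 f3 with e2 | e2
    · subst e2
      refine Or.inl ⟨1, ?_⟩
      simp only [blockT, reduceIte]
      exact Set.insert_subset hp1 (Set.singleton_subset_iff.mpr hp2)
    · -- p2 = h1 (a+1), third piece at (2, a+2)
      subst e2
      obtain ⟨p3, hp3, hm3⟩ := hget ((2:ℤ), a+2) (by simp [strip]; omega)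
      have hne13 : l2 a ≠ p3 := by
        intro he; rw [← he] at hm3
        simp only [l2, Set.mem_insert_iff, Set.mem_singleton_iff, Prod.mk.injEq] at hm3; omega
      have hne23 : h1 (a+1) ≠ p3 := by
        intro he; rw [← he] at hm3
        simp only [h1, Set.mem_insert_iff, Set.mem_singleton_iff, Prod.mk.injEq] at hm3; omega
      have f1 : ((1:ℤ), a+2-1) ∉ p3 := by
        rw [show a+2-1 = a+1 by ring]; exact pd_ne hd hp2 hp3 hne23 (by simp [h1])
      have f2 : ((2:ℤ), a+2-1) ∉ p3 := by
        rw [show a+2-1 = a+1 by ring]; exact pd_ne hd hp1 hp3 hne13 (by simp [l2])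
      have f3 : ((1:ℤ), a+2) ∉ p3 := pd_ne hd hp2 hp3 hne23 (by simp [h1]; omega)
      rcases step_bot (hshape _ hp3) (hrows _ hp3) hm3 f1 f2 f3 with e3 | e3
      · subst e3
        refine Or.inr ⟨0, ?_⟩
        simp only [blockM, reduceIte]
        exact Set.insert_subset hp1 (Set.insert_subset hp2
          (Set.singleton_subset_iff.mpr hp3))
      · exfalso
        subst e3
        have := dom_unique hdom1 hp2 (hdom_h1 (a+1)) hp3 (hdom_h2 (a+2))
        exact (ne_piece ((1:ℤ),a+1) (by simp [h1]) (by
          simp only [h2, Set.mem_insert_iff, Set.mem_singleton_iff, Prod.mk.injEq]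
          omega)) this
  · -- p1 = l3 a : impossible
    exfalso
    subst e
    obtain ⟨p2, hp2, hm2⟩ := hget ((2:ℤ), a) (by simp [strip]; omega)
    have hne : l3 a ≠ p2 := by
      intro he; rw [← he] at hm2
      simp only [l3, Set.mem_insert_iff, Set.mem_singleton_iff, Prod.mk.injEq] at hm2; omega
    have f1 : ((1:ℤ), a-1) ∉ p2 := by
      intro hc; have := hsub _ hp2 _ hc; simp [strip] at this <;> omega
    have f2 : ((2:ℤ), a-1) ∉ p2 := by
      intro hc; have := hsub _ hp2 _ hc; simp [strip] at this <;> omega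
    have f3 : ((1:ℤ), a) ∉ p2 := pd_ne hd hp1 hp2 hne (by simp [l3])
    rcases step_bot (hshape _ hp2) (hrows _ hp2) hm2 f1 f2 f3 with e2 | e2
    · exact pd_ne hd hp1 hp2 hne (by simp [l3] : ((1:ℤ),a+1) ∈ l3 a)
        (by rw [e2]; simp [l4])
    · exact pd_ne hd hp1 hp2 hne (by simp [l3] : ((2:ℤ),a+1) ∈ l3 a)
        (by rw [e2]; simp [h2])
  · -- p1 = h1 a : impossible
    exfalso
    subst e
    obtain ⟨p2, hp2, hm2⟩ := hget ((2:ℤ), a) (by simp [strip]; omega)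
    have hne : h1 a ≠ p2 := by
      intro he; rw [← he] at hm2
      simp only [h1, Set.mem_insert_iff, Set.mem_singleton_iff, Prod.mk.injEq] at hm2; omega
    have f1 : ((1:ℤ), a-1) ∉ p2 := by
      intro hc; have := hsub _ hp2 _ hc; simp [strip] at this <;> omega
    have f2 : ((2:ℤ), a-1) ∉ p2 := by
      intro hc; have := hsub _ hp2 _ hc; simp [strip] at this <;> omega
    have f3 : ((1:ℤ), a) ∉ p2 := pd_ne hd hp1 hp2 hne (by simp [h1])
    rcases step_bot (hshape _ hp2) (hrows _ hp2) hm2 f1 f2 f3 with e2 | e2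
    · exact pd_ne hd hp1 hp2 hne (by simp [h1] : ((1:ℤ),a+1) ∈ h1 a)
        (by rw [e2]; simp [l4])
    · have := dom_unique hdom1 hp1 (hdom_h1 a) hp2 (e2 ▸ hdom_h2 a)
      exact (ne_piece ((1:ℤ),a) (by simp [h1]) (by
        simp only [h2, Set.mem_insert_iff, Set.mem_singleton_iff, Prod.mk.injEq]
        omega) : h1 a ≠ h2 a) (this.trans e2)

lemma finite_of_ncard_pos {α : Type*} {s : Set α} {n : ℕ} (h : s.ncard = n + 1) :
    s.Finite := by
  by_contra hf
  rw [Set.Infinite.ncard hf] at h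
  omega

/-- Remainder after removing a 2x3 tromino block from a mixed tiling. -/
lemma rem_mixed {P : Set (Set Cell)} {x y : Set Cell} {a n : ℤ} {t : ℕ}
    (hd : P.PairwiseDisjoint id) (hu : ⋃₀ P = strip a n)
    (hshape : ∀ p ∈ P, IsTromino p ∨ IsHDomino p)
    (hdom1 : {p ∈ P | IsHDomino p}.ncard = 1)
    (htrom : {p ∈ P | IsTromino p}.ncard = 2*t + 2)
    (hx : x ∈ P) (hy : y ∈ P) (hxy : x ≠ y) (htx : IsTromino x) (hty : IsTromino y)
    (hBu : ⋃₀ ({x, y} : Set (Set Cell)) = strip a 3) :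
    IsMixedTiling (P \ {x, y}) (strip (a+3) (n-3)) IsHDomino (2*t) := by
  have hBP : ({x, y} : Set (Set Cell)) ⊆ P :=
    Set.insert_subset hx (Set.singleton_subset_iff.mpr hy)
  refine ⟨hd.subset Set.diff_subset, ?_, fun p hp => hshape p hp.1, ?_, ?_⟩
  · rw [sdiff_tiling hd hu hBP hBu, strip_sdiff a n 3 (by norm_num)]
  · have he : {p ∈ P \ ({x, y} : Set (Set Cell)) | IsHDomino p} = {p ∈ P | IsHDomino p} := by
      ext p
      simp only [Set.mem_setOf_eq, Set.mem_diff, Set.mem_insert_iff, Set.mem_singleton_iff]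
      constructor
      · rintro ⟨⟨hpP, _⟩, hdp⟩; exact ⟨hpP, hdp⟩
      · rintro ⟨hpP, hdp⟩
        refine ⟨⟨hpP, ?_⟩, hdp⟩
        rintro (rfl | rfl)
        · exact hdom_not_trom hdp htx
        · exact hdom_not_trom hdp hty
    rw [he, hdom1]
  · have he : {p ∈ P | IsTromino p} =
        insert x (insert y {p ∈ P \ ({x, y} : Set (Set Cell)) | IsTromino p}) := by
      ext p
      simp only [Set.mem_setOf_eq, Set.mem_insert_iff, Set.mem_diff, Set.mem_singleton_iff]
      constructor
      · rintro ⟨hpP, hdp⟩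
        by_cases h1 : p = x
        · exact Or.inl h1
        by_cases h2 : p = y
        · exact Or.inr (Or.inl h2)
        · exact Or.inr (Or.inr ⟨⟨hpP, by tauto⟩, hdp⟩)
      · rintro (rfl | rfl | ⟨⟨hpP, _⟩, hdp⟩)
        · exact ⟨hx, htx⟩
        · exact ⟨hy, hty⟩
        · exact ⟨hpP, hdp⟩
    have hfin : {p ∈ P | IsTromino p}.Finite := finite_of_ncard_pos (n := 2*t+1)
      (by rw [htrom]; try ring)
    have hfin2 : {p ∈ P \ ({x, y} : Set (Set Cell)) | IsTromino p}.Finite := by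
      refine hfin.subset ?_
      intro p hp
      exact ⟨hp.1.1, hp.2⟩
    have hxn : x ∉ insert y {p ∈ P \ ({x, y} : Set (Set Cell)) | IsTromino p} := by
      intro hmem
      rcases Set.mem_insert_iff.mp hmem with h' | h'
      · exact hxy h'
      · exact h'.1.2 (Set.mem_insert _ _)
    have hyn : y ∉ {p ∈ P \ ({x, y} : Set (Set Cell)) | IsTromino p} :=
      fun hmem => hmem.1.2 (Set.mem_insert_of_mem _ rfl)
    rw [he] at htrom
    rw [Set.ncard_insert_of_notMem hxn (Set.Finite.insert _ hfin2),
      Set.ncard_insert_of_notMem hyn hfin2] at htrom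
    omega

/-- Remainder after removing the 2x4 mixed block from a mixed tiling. -/
lemma rem_trom {P : Set (Set Cell)} {x d y : Set Cell} {a n : ℤ}
    (hd : P.PairwiseDisjoint id) (hu : ⋃₀ P = strip a n)
    (hshape : ∀ p ∈ P, IsTromino p ∨ IsHDomino p)
    (hdom1 : {p ∈ P | IsHDomino p}.ncard = 1)
    (hx : x ∈ P) (hdP : d ∈ P) (hy : y ∈ P) (hdd : IsHDomino d)
    (hBu : ⋃₀ ({x, d, y} : Set (Set Cell)) = strip a 4) :
    IsTromTiling (P \ {x, d, y}) (strip (a+4) (n-4)) := by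
  have hBP : ({x, d, y} : Set (Set Cell)) ⊆ P :=
    Set.insert_subset hx (Set.insert_subset hdP (Set.singleton_subset_iff.mpr hy))
  refine ⟨?_, hd.subset Set.diff_subset, ?_⟩
  · rintro p ⟨hpP, hpB⟩
    rcases hshape p hpP with ht | hdp
    · exact ht
    · exfalso
      have : p = d := dom_unique hdom1 hpP hdp hdP hdd
      exact hpB (by rw [this]; simp)
  · rw [sdiff_tiling hd hu hBP hBu, strip_sdiff a n 4 (by norm_num)]

lemma strips_disjoint (a m n : ℤ) : Disjoint (strip a m) (strip (a+m) n) := by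
  rw [Set.disjoint_left]
  rintro ⟨x, y⟩ h1 h2
  simp only [strip, Set.mem_setOf_eq] at h1 h2
  omega

lemma strip_union (a n m : ℤ) (h1 : 0 ≤ m) (h2 : m ≤ n) :
    strip a m ∪ strip (a+m) (n-m) = strip a n := by
  ext ⟨x, y⟩; simp [strip] <;> omega

/-- mixed tilings are impossible on a width-1 strip -/
lemma mt_w1 {P : Set (Set Cell)} {a : ℤ}
    (hu : ⋃₀ P = strip a 1) (hshape : ∀ p ∈ P, IsTromino p ∨ IsHDomino p) : False := by
  have hm : ((1:ℤ), a) ∈ strip a 1 := by simp [strip]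
  rw [← hu] at hm
  obtain ⟨p, hp, hmp⟩ := hm
  have hsub : ∀ c ∈ p, c ∈ strip a 1 := fun c hc => (piece_sub hu hp) hc
  have hbnd : ∀ c ∈ p, (1:ℤ) ≤ c.1 ∧ c.1 ≤ 2 ∧ a ≤ c.2 := by
    intro c hc; have := hsub c hc; simp [strip] at this
    exact ⟨this.1, this.2.1, this.2.2.1⟩
  have hbad : ∀ c ∈ p, c.2 ≤ a := by
    intro c hc; have := hsub c hc; simp [strip] at this; omega
  rcases step_first (hshape p hp) hbnd hmp with e | e | e | e <;> subst e
  · have := hbad ((1:ℤ), a+1) (by simp [l1]); omega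
  · have := hbad ((2:ℤ), a+1) (by simp [l2]); omega
  · have := hbad ((1:ℤ), a+1) (by simp [l3]); omega
  · have := hbad ((1:ℤ), a+1) (by simp [h1]); omega

lemma trom_nonempty {p : Set Cell} (h : IsTromino p) : p.Nonempty := by
  obtain ⟨x, y, h1, _⟩ := trom_pair h
  exact ⟨(x, y), h1⟩

lemma blockT_trom {a : ℤ} {b : Fin 2} : ∀ p ∈ blockT a b, IsTromino p := by
  fin_cases b <;>
  · intro p hp
    simp only [blockT, reduceIte, Set.mem_insert_iff, Set.mem_singleton_iff] at hp
    rcases hp with rfl | rfl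
    · first | exact trom_l1 a | exact trom_l2 a
    · first | exact trom_l4 (a+1) | exact trom_l3 (a+1)

lemma blockT_pd {a : ℤ} {b : Fin 2} : (blockT a b).PairwiseDisjoint id := by
  fin_cases b <;>
  · intro u hu v hv hne
    simp only [blockT, reduceIte, Set.mem_insert_iff, Set.mem_singleton_iff] at hu hv
    rcases hu with rfl | rfl <;> rcases hv with rfl | rfl <;>
      first
        | exact absurd rfl hne
        | · rw [Function.onFun, Set.disjoint_left]
            rintro ⟨cx, cy⟩ h h'
            simp only [id_eq, l1, l2, l3, l4, Set.mem_insert_iff, Set.mem_singleton_iff,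
              Prod.mk.injEq] at h h'
            omega

lemma blockM_pd {a : ℤ} {b : Fin 2} : (blockM a b).PairwiseDisjoint id := by
  fin_cases b <;>
  · intro u hu v hv hne
    simp only [blockM, reduceIte, Set.mem_insert_iff, Set.mem_singleton_iff] at hu hv
    rcases hu with rfl | rfl | rfl <;> rcases hv with rfl | rfl | rfl <;>
      first
        | exact absurd rfl hne
        | · rw [Function.onFun, Set.disjoint_left]
            rintro ⟨cx, cy⟩ h h'
            simp only [id_eq, l1, l2, l3, l4, h1, h2, Set.mem_insert_iff, Set.mem_singleton_iff,
              Prod.mk.injEq] at h h'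
            omega

lemma block_not_in_Q {B Q : Set (Set Cell)} {S S' : Set Cell}
    (hBu : ⋃₀ B = S) (hQu : ⋃₀ Q = S') (hdis : Disjoint S S')
    (hne : ∀ p ∈ B, p.Nonempty) : ∀ p ∈ B, p ∉ Q := by
  intro p hpB hpQ
  obtain ⟨c, hc⟩ := hne p hpB
  exact Set.disjoint_left.mp hdis ((piece_sub hBu hpB) hc) ((piece_sub hQu hpQ) hc)

lemma glue_pd {B Q : Set (Set Cell)} {S S' : Set Cell}
    (hB : B.PairwiseDisjoint id) (hQ : Q.PairwiseDisjoint id)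
    (hBu : ⋃₀ B = S) (hQu : ⋃₀ Q = S') (hdis : Disjoint S S') :
    (B ∪ Q).PairwiseDisjoint id := by
  intro u hu v hv hne
  rcases hu with hu | hu <;> rcases hv with hv | hv
  · exact hB hu hv hne
  · exact hdis.mono (piece_sub hBu hu) (piece_sub hQu hv)
  · exact (hdis.mono (piece_sub hBu hv) (piece_sub hQu hu)).symm
  · exact hQ hu hv hne

lemma tt_glue {a n : ℤ} {Q : Set (Set Cell)} (hn : 3 ≤ n) (b : Fin 2)
    (hQ : IsTromTiling Q (strip (a+3) (n-3))) :
    IsTromTiling (blockT a b ∪ Q) (strip a n) := by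
  obtain ⟨hQt, hQd, hQu⟩ := hQ
  refine ⟨?_, ?_, ?_⟩
  · intro p hp
    rcases hp with hp | hp
    · exact blockT_trom p hp
    · exact hQt p hp
  · exact glue_pd blockT_pd hQd (blockT_sUnion a b) hQu (strips_disjoint a 3 (n-3))
  · rw [Set.sUnion_union, blockT_sUnion a b, hQu, strip_union a n 3 (by norm_num) hn]

lemma mt_glue_T {a n : ℤ} {t : ℕ} {Q : Set (Set Cell)} (hn : 3 ≤ n) (b : Fin 2)
    (hQ : IsMixedTiling Q (strip (a+3) (n-3)) IsHDomino (2*t))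
    (hQfin : {p ∈ Q | IsTromino p}.Finite) :
    IsMixedTiling (blockT a b ∪ Q) (strip a n) IsHDomino (2*t+2) := by
  obtain ⟨hQd, hQu, hQs, hQ1, hQk⟩ := hQ
  have hnotin : ∀ p ∈ blockT a b, p ∉ Q :=
    block_not_in_Q (blockT_sUnion a b) hQu (strips_disjoint a 3 (n-3))
      (fun p hp => trom_nonempty (blockT_trom p hp))
  refine ⟨glue_pd blockT_pd hQd (blockT_sUnion a b) hQu (strips_disjoint a 3 (n-3)), ?_, ?_, ?_, ?_⟩
  · rw [Set.sUnion_union, blockT_sUnion a b, hQu, strip_union a n 3 (by norm_num) hn]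
  · intro p hp
    rcases hp with hp | hp
    · exact Or.inl (blockT_trom p hp)
    · exact hQs p hp
  · have he : {p ∈ blockT a b ∪ Q | IsHDomino p} = {p ∈ Q | IsHDomino p} := by
      ext p
      simp only [Set.mem_setOf_eq, Set.mem_union]
      constructor
      · rintro ⟨hp | hp, hdp⟩
        · exact absurd (blockT_trom p hp) (hdom_not_trom hdp)
        · exact ⟨hp, hdp⟩
      · rintro ⟨hp, hdp⟩; exact ⟨Or.inr hp, hdp⟩
    rw [he, hQ1]
  · obtain ⟨x, y, hxy, hBe⟩ : ∃ x y : Set Cell, x ≠ y ∧ blockT a b = {x, y} := by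
      fin_cases b
      · refine ⟨l1 a, l4 (a+1), ?_, by simp [blockT]⟩
        exact ne_piece ((1:ℤ), a) (by simp [l1]) (by
          simp only [l4, Set.mem_insert_iff, Set.mem_singleton_iff, Prod.mk.injEq]; omega)
      · refine ⟨l2 a, l3 (a+1), ?_, by simp [blockT]⟩
        exact ne_piece ((1:ℤ), a) (by simp [l2]) (by
          simp only [l3, Set.mem_insert_iff, Set.mem_singleton_iff, Prod.mk.injEq]; omega)
    have htx : IsTromino x := blockT_trom x (by rw [hBe]; simp)
    have hty : IsTromino y := blockT_trom y (by rw [hBe]; simp)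
    have hxQ : x ∉ Q := hnotin x (by rw [hBe]; simp)
    have hyQ : y ∉ Q := hnotin y (by rw [hBe]; simp)
    rw [hBe]
    have he : {p ∈ ({x, y} : Set (Set Cell)) ∪ Q | IsTromino p} =
        insert x (insert y {p ∈ Q | IsTromino p}) := by
      ext p
      simp only [Set.mem_setOf_eq, Set.mem_union, Set.mem_insert_iff, Set.mem_singleton_iff]
      constructor
      · rintro ⟨(rfl | rfl) | hp, hdp⟩
        · exact Or.inl rfl
        · exact Or.inr (Or.inl rfl)
        · exact Or.inr (Or.inr ⟨hp, hdp⟩)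
      · rintro (rfl | rfl | ⟨hp, hdp⟩)
        · exact ⟨Or.inl (Or.inl rfl), htx⟩
        · exact ⟨Or.inl (Or.inr rfl), hty⟩
        · exact ⟨Or.inr hp, hdp⟩
    rw [he]
    have hxn : x ∉ insert y {p ∈ Q | IsTromino p} := by
      intro hmem
      rcases Set.mem_insert_iff.mp hmem with h' | h'
      · exact hxy h'
      · exact hxQ h'.1
    have hyn : y ∉ {p ∈ Q | IsTromino p} := fun hmem => hyQ hmem.1
    rw [Set.ncard_insert_of_notMem hxn (hQfin.insert _),
      Set.ncard_insert_of_notMem hyn hQfin, hQk]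

lemma blockM_parts {a : ℤ} (b : Fin 2) :
    ∃ x d y : Set Cell, blockM a b = {x, d, y} ∧ IsTromino x ∧ IsHDomino d ∧ IsTromino y ∧
      x ≠ d ∧ x ≠ y ∧ d ≠ y := by
  fin_cases b
  · refine ⟨l2 a, h1 (a+1), l4 (a+2), by simp [blockM], trom_l2 a, hdom_h1 (a+1),
      trom_l4 (a+2), ?_, ?_, ?_⟩
    · exact ne_piece ((2:ℤ), a) (by simp [l2]) (by
        simp only [h1, Set.mem_insert_iff, Set.mem_singleton_iff, Prod.mk.injEq]; omega)
    · exact ne_piece ((1:ℤ), a) (by simp [l2]) (by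
        simp only [l4, Set.mem_insert_iff, Set.mem_singleton_iff, Prod.mk.injEq]; omega)
    · exact ne_piece ((1:ℤ), a+1) (by simp [h1]) (by
        simp only [l4, Set.mem_insert_iff, Set.mem_singleton_iff, Prod.mk.injEq]; omega)
  · refine ⟨l1 a, h2 (a+1), l3 (a+2), by simp [blockM], trom_l1 a, hdom_h2 (a+1),
      trom_l3 (a+2), ?_, ?_, ?_⟩
    · exact ne_piece ((1:ℤ), a) (by simp [l1]) (by
        simp only [h2, Set.mem_insert_iff, Set.mem_singleton_iff, Prod.mk.injEq]; omega)
    · exact ne_piece ((1:ℤ), a) (by simp [l1]) (by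
        simp only [l3, Set.mem_insert_iff, Set.mem_singleton_iff, Prod.mk.injEq]; omega)
    · exact ne_piece ((2:ℤ), a+1) (by simp [h2]) (by
        simp only [l3, Set.mem_insert_iff, Set.mem_singleton_iff, Prod.mk.injEq]; omega)

lemma blockM_shape {a : ℤ} {b : Fin 2} : ∀ p ∈ blockM a b, IsTromino p ∨ IsHDomino p := by
  intro p hp
  obtain ⟨x, d, y, hBe, htx, hdd, hty, _, _, _⟩ := blockM_parts (a := a) b
  rw [hBe] at hp
  rcases hp with rfl | rfl | rfl
  · exact Or.inl htx
  · exact Or.inr hdd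
  · exact Or.inl hty

lemma mt_glue_M {a n : ℤ} {t : ℕ} {Q : Set (Set Cell)} (hn : 4 ≤ n) (b : Fin 2)
    (hQ : IsTromTiling Q (strip (a+4) (n-4)))
    (hQfin : Q.Finite) (hQcard : Q.ncard = 2*t) :
    IsMixedTiling (blockM a b ∪ Q) (strip a n) IsHDomino (2*t+2) := by
  obtain ⟨hQt, hQd, hQu⟩ := hQ
  obtain ⟨x, d, y, hBe, htx, hdd, hty, hxd, hxy, hdy⟩ := blockM_parts (a := a) b
  have hnotin : ∀ p ∈ blockM a b, p ∉ Q :=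
    block_not_in_Q (blockM_sUnion a b) hQu (strips_disjoint a 4 (n-4))
      (fun p hp => by
        rcases blockM_shape p hp with h | h
        · exact trom_nonempty h
        · obtain ⟨i, j, rfl⟩ := h; exact ⟨(i, j), by simp⟩)
  refine ⟨glue_pd blockM_pd hQd (blockM_sUnion a b) hQu (strips_disjoint a 4 (n-4)), ?_, ?_, ?_, ?_⟩
  · rw [Set.sUnion_union, blockM_sUnion a b, hQu, strip_union a n 4 (by norm_num) hn]
  · intro p hp
    rcases hp with hp | hp
    · exact blockM_shape p hp
    · exact Or.inl (hQt p hp)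
  · have he : {p ∈ blockM a b ∪ Q | IsHDomino p} = {d} := by
      ext p
      simp only [Set.mem_setOf_eq, Set.mem_union, Set.mem_singleton_iff]
      constructor
      · rintro ⟨hp | hp, hdp⟩
        · rw [hBe] at hp
          rcases hp with rfl | rfl | rfl
          · exact absurd htx (hdom_not_trom hdp)
          · rfl
          · exact absurd hty (hdom_not_trom hdp)
        · exact absurd (hQt p hp) (hdom_not_trom hdp)
      · rintro rfl
        exact ⟨Or.inl (by rw [hBe]; simp), hdd⟩
    rw [he, Set.ncard_singleton]
  · have he : {p ∈ blockM a b ∪ Q | IsTromino p} = insert x (insert y Q) := by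
      ext p
      simp only [Set.mem_setOf_eq, Set.mem_union, Set.mem_insert_iff]
      constructor
      · rintro ⟨hp | hp, hdp⟩
        · rw [hBe] at hp
          rcases hp with rfl | rfl | rfl
          · exact Or.inl rfl
          · exact absurd hdp (hdom_not_trom hdd)
          · exact Or.inr (Or.inl rfl)
        · exact Or.inr (Or.inr hp)
      · rintro (rfl | rfl | hp)
        · exact ⟨Or.inl (by rw [hBe]; simp), htx⟩
        · exact ⟨Or.inl (by rw [hBe]; simp), hty⟩
        · exact ⟨Or.inr hp, hQt p hp⟩
    rw [he]
    have hxQ : x ∉ Q := hnotin x (by rw [hBe]; simp)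
    have hyQ : y ∉ Q := hnotin y (by rw [hBe]; simp)
    have hxn : x ∉ insert y Q := by
      intro hmem
      rcases Set.mem_insert_iff.mp hmem with h' | h'
      · exact hxy h'
      · exact hxQ h'
    rw [Set.ncard_insert_of_notMem hxn (hQfin.insert _),
      Set.ncard_insert_of_notMem hyQ hQfin, hQcard]

lemma strip_zero (a : ℤ) : strip a 0 = ∅ := by
  ext ⟨x, y⟩; simp [strip]

lemma blockT_eq_pair (a : ℤ) (b : Fin 2) :
    ∃ x y : Set Cell, x ≠ y ∧ blockT a b = {x, y} := by
  fin_cases b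
  · refine ⟨l1 a, l4 (a+1), ?_, by simp [blockT]⟩
    exact ne_piece ((1:ℤ), a) (by simp [l1]) (by
      simp only [l4, Set.mem_insert_iff, Set.mem_singleton_iff, Prod.mk.injEq]; omega)
  · refine ⟨l2 a, l3 (a+1), ?_, by simp [blockT]⟩
    exact ne_piece ((1:ℤ), a) (by simp [l2]) (by
      simp only [l3, Set.mem_insert_iff, Set.mem_singleton_iff, Prod.mk.injEq]; omega)

lemma blockT_finite (a : ℤ) (b : Fin 2) : (blockT a b).Finite := by
  obtain ⟨x, y, _, he⟩ := blockT_eq_pair a b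
  rw [he]
  exact (Set.finite_singleton y).insert x

lemma blockT_ncard (a : ℤ) (b : Fin 2) : (blockT a b).ncard = 2 := by
  obtain ⟨x, y, hne, he⟩ := blockT_eq_pair a b
  rw [he, Set.ncard_pair hne]

lemma tt_ncard (s : ℕ) : ∀ (a : ℤ) (P : Set (Set Cell)),
    IsTromTiling P (strip a (3*(s:ℤ))) → P.Finite ∧ P.ncard = 2*s := by
  induction s with
  | zero =>
    rintro a P ⟨hT, hd, hu⟩
    have hP : P = ∅ := by
      ext p
      simp only [Set.mem_empty_iff_false, iff_false]
      intro hp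
      obtain ⟨c, hc⟩ := trom_nonempty (hT p hp)
      have := (piece_sub hu hp) hc
      simp only [Nat.cast_zero, mul_zero, strip_zero] at this
      exact this
    subst hP
    simp
  | succ s ih =>
    intro a P h
    rw [show (3*((s+1:ℕ)):ℤ) = 3*(s:ℤ)+3 by push_cast; ring] at h
    obtain ⟨b, hB, hrem⟩ := tt_peel (by omega) h
    rw [show (3*(s:ℤ)+3-3) = 3*(s:ℤ) by ring] at hrem
    obtain ⟨hfin, hcard⟩ := ih (a+3) _ hrem
    have hPe : P = blockT a b ∪ (P \ blockT a b) := (Set.union_diff_cancel hB).symm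
    constructor
    · rw [hPe]; exact (blockT_finite a b).union hfin
    · rw [hPe, Set.ncard_union_eq Set.disjoint_sdiff_right (blockT_finite a b) hfin,
        blockT_ncard a b, hcard]
      ring

def TTt (a : ℤ) (s : ℕ) := {P : Set (Set Cell) // IsTromTiling P (strip a (3*(s:ℤ)))}

def MTt (a : ℤ) (t : ℕ) :=
  {P : Set (Set Cell) // IsMixedTiling P (strip a (3*(t:ℤ)+1)) IsHDomino (2*t)}

lemma tt_zero_eq_empty {a : ℤ} {P : Set (Set Cell)}
    (h : IsTromTiling P (strip a (3*((0:ℕ):ℤ)))) : P = ∅ := by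
  obtain ⟨hfin, hcard⟩ := tt_ncard 0 a P h
  rw [mul_zero] at hcard
  exact (Set.ncard_eq_zero hfin).mp hcard

instance tt_zero_sub (a : ℤ) : Subsingleton (TTt a 0) := by
  constructor
  rintro ⟨P, hP⟩ ⟨P', hP'⟩
  exact Subtype.ext ((tt_zero_eq_empty hP).trans (tt_zero_eq_empty hP').symm)

instance tt_zero_ne (a : ℤ) : Nonempty (TTt a 0) := by
  refine ⟨⟨∅, ?_, ?_, ?_⟩⟩
  · intro p hp; exact absurd hp (Set.notMem_empty p)
  · exact Set.pairwiseDisjoint_empty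
  · rw [Set.sUnion_empty]
    simp [strip_zero]

/-- gluing map for pure tromino tilings -/
def gT (a : ℤ) (s : ℕ) : Fin 2 × TTt (a+3) s → TTt a (s+1) := fun x =>
  ⟨blockT a x.1 ∪ x.2.1, by
    rw [show (3*(((s+1:ℕ)):ℤ)) = 3*(s:ℤ)+3 by push_cast; ring]
    refine tt_glue (by omega) x.1 ?_
    rw [show (3*(s:ℤ)+3-3) = 3*(s:ℤ) by ring]
    exact x.2.2⟩

lemma pieces_high {Q : Set (Set Cell)} {a' n : ℤ} (hu : ⋃₀ Q = strip a' n) :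
    ∀ p ∈ Q, ∀ c ∈ p, a' ≤ c.2 := by
  intro p hp c hc
  have := (piece_sub hu hp) hc
  simp only [strip, Set.mem_setOf_eq] at this
  omega

lemma mem_union_resolve_low {p : Set Cell} {B Q : Set (Set Cell)} {a' n : ℤ}
    (hp : p ∈ B ∪ Q) (hQu : ⋃₀ Q = strip a' n) (hlow : ∃ c ∈ p, c.2 < a') : p ∈ B := by
  rcases hp with hp | hp
  · exact hp
  · exfalso
    obtain ⟨c, hc, hlt⟩ := hlow
    have := pieces_high hQu p hp c hc
    omega

lemma blockT_low (a : ℤ) (b : Fin 2) : ∀ p ∈ blockT a b, ∃ c ∈ p, c.2 < a + 3 := by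
  fin_cases b <;>
  · intro p hp
    simp only [blockT, reduceIte, Set.mem_insert_iff, Set.mem_singleton_iff] at hp
    rcases hp with rfl | rfl
    · exact ⟨((1:ℤ), a), by simp [l1, l2], by omega⟩
    · first
      | exact ⟨((2:ℤ), a+1), by simp [l4], by omega⟩
      | exact ⟨((1:ℤ), a+1), by simp [l3], by omega⟩

lemma blockM_low (a : ℤ) (b : Fin 2) : ∀ p ∈ blockM a b, ∃ c ∈ p, c.2 < a + 4 := by
  fin_cases b <;>
  · intro p hp
    simp only [blockM, reduceIte, Set.mem_insert_iff, Set.mem_singleton_iff] at hp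
    rcases hp with rfl | rfl | rfl
    · exact ⟨((1:ℤ), a), by simp [l1, l2], by omega⟩
    · first
      | exact ⟨((1:ℤ), a+1), by simp [h1], by omega⟩
      | exact ⟨((2:ℤ), a+1), by simp [h2], by omega⟩
    · first
      | exact ⟨((2:ℤ), a+2), by simp [l4], by omega⟩
      | exact ⟨((1:ℤ), a+2), by simp [l3], by omega⟩

lemma gT_bij (a : ℤ) (s : ℕ) : Function.Bijective (gT a s) := by
  constructor
  · rintro ⟨b, Q, hQ⟩ ⟨b', Q', hQ'⟩ hEq
    have E : blockT a b ∪ Q = blockT a b' ∪ Q' := congrArg Subtype.val hEq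
    have hQu := hQ.2.2
    have hQu' := hQ'.2.2
    have fin2 : ∀ c : Fin 2, c = 0 ∨ c = 1 := by decide
    have hbb : b = b' := by
      rcases fin2 b with rfl | rfl <;> rcases fin2 b' with rfl | rfl <;> first
        | rfl
        | (exfalso
           first
            | (have h0 : l1 a ∈ blockT a (0:Fin 2) ∪ Q := Or.inl (by simp [blockT])
               rw [E] at h0
               have h1' : l1 a ∈ blockT a (1:Fin 2) :=
                 mem_union_resolve_low h0 hQu' ⟨((1:ℤ), a), by simp [l1], by omega⟩
               simp only [blockT, reduceIte, Set.mem_insert_iff, Set.mem_singleton_iff] at h1'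
               rcases h1' with h' | h'
               · exact (ne_piece ((1:ℤ), a+1) (by simp [l1]) (by
                   simp only [l2, Set.mem_insert_iff, Set.mem_singleton_iff, Prod.mk.injEq]
                   omega)) h'
               · exact (ne_piece ((1:ℤ), a) (by simp [l1]) (by
                   simp only [l3, Set.mem_insert_iff, Set.mem_singleton_iff, Prod.mk.injEq]
                   omega)) h')
            | (have h0 : l2 a ∈ blockT a (1:Fin 2) ∪ Q := Or.inl (by simp [blockT])
               rw [E] at h0
               have h1' : l2 a ∈ blockT a (0:Fin 2) :=
                 mem_union_resolve_low h0 hQu' ⟨((1:ℤ), a), by simp [l2], by omega⟩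
               simp only [blockT, reduceIte, Set.mem_insert_iff, Set.mem_singleton_iff] at h1'
               rcases h1' with h' | h'
               · exact (ne_piece ((2:ℤ), a+1) (by simp [l2]) (by
                   simp only [l1, Set.mem_insert_iff, Set.mem_singleton_iff, Prod.mk.injEq]
                   omega)) h'
               · exact (ne_piece ((1:ℤ), a) (by simp [l2]) (by
                   simp only [l4, Set.mem_insert_iff, Set.mem_singleton_iff, Prod.mk.injEq]
                   omega)) h'))
    subst hbb
    have hQQ' : Q = Q' := by
      refine union_eq_cancel E ?_ ?_
      · intro p hp hpB
        obtain ⟨c, hc, hlt⟩ := blockT_low a b p hpB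
        have := pieces_high hQu p hp c hc
        omega
      · intro p hp hpB
        obtain ⟨c, hc, hlt⟩ := blockT_low a b p hpB
        have := pieces_high hQu' p hp c hc
        omega
    exact Prod.ext rfl (Subtype.ext hQQ')
  · rintro ⟨P, hP⟩
    rw [show (3*(((s+1:ℕ)):ℤ)) = 3*(s:ℤ)+3 by push_cast; ring] at hP
    obtain ⟨b, hB, hrem⟩ := tt_peel (by omega) hP
    rw [show (3*(s:ℤ)+3-3) = 3*(s:ℤ) by ring] at hrem
    exact ⟨⟨b, ⟨P \ blockT a b, hrem⟩⟩, Subtype.ext (Set.union_diff_cancel hB)⟩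

lemma tt_count (s : ℕ) : ∀ a : ℤ, Nat.card (TTt a s) = 2^s ∧ Finite (TTt a s) := by
  induction s with
  | zero =>
    intro a
    constructor
    · rw [pow_zero, Nat.card_eq_one_iff_unique]
      exact ⟨tt_zero_sub a, tt_zero_ne a⟩
    · exact Finite.of_subsingleton
  | succ s ih =>
    intro a
    haveI : Finite (TTt (a+3) s) := (ih (a+3)).2
    have hcard := Nat.card_eq_of_bijective (gT a s) (gT_bij a s)
    constructor
    · rw [← hcard, Nat.card_prod, (ih (a+3)).1, Nat.card_eq_fintype_card, Fintype.card_fin]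
      ring
    · exact Finite.of_surjective (gT a s) (gT_bij a s).2

lemma mt_zero_empty (a : ℤ) : IsEmpty (MTt a 0) := by
  constructor
  rintro ⟨P, hd, hu, hshape, _, _⟩
  rw [show (3*((0:ℕ):ℤ)+1) = (1:ℤ) by simp] at hu
  exact mt_w1 hu hshape

lemma blockM_dom (a : ℤ) (b : Fin 2) :
    ∃ d ∈ blockM a b, IsHDomino d ∧ (∃ c ∈ d, c.2 < a + 3) := by
  fin_cases b
  · exact ⟨h1 (a+1), by simp [blockM], hdom_h1 _, ⟨((1:ℤ), a+1), by simp [h1], by omega⟩⟩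
  · exact ⟨h2 (a+1), by simp [blockM], hdom_h2 _, ⟨((2:ℤ), a+1), by simp [h2], by omega⟩⟩

/-- gluing map for mixed tilings -/
def gM (a : ℤ) (t : ℕ) : (Fin 2 × MTt (a+3) t) ⊕ (Fin 2 × TTt (a+4) t) → MTt a (t+1) :=
  fun x =>
  match x with
  | .inl (b, Q) => ⟨blockT a b ∪ Q.1, by
      rw [show (3*(((t+1:ℕ)):ℤ)+1) = 3*(t:ℤ)+4 by push_cast; ring,
        show 2*(t+1) = 2*t+2 by ring]
      have hfin : {p ∈ Q.1 | IsTromino p}.Finite := by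
        rcases Nat.eq_zero_or_pos t with rfl | hpos
        · exact ((mt_zero_empty (a+3)).false Q).elim
        · exact finite_of_ncard_pos (n := 2*t - 1)
            (by rw [Q.2.2.2.2.2]; omega)
      have hQ' : IsMixedTiling Q.1 (strip (a+3) (3*(t:ℤ)+4-3)) IsHDomino (2*t) := by
        rw [show (3*(t:ℤ)+4-3) = 3*(t:ℤ)+1 by ring]; exact Q.2
      exact mt_glue_T (by omega) b hQ' hfin⟩
  | .inr (b, Q) => ⟨blockM a b ∪ Q.1, by
      rw [show (3*(((t+1:ℕ)):ℤ)+1) = 3*(t:ℤ)+4 by push_cast; ring,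
        show 2*(t+1) = 2*t+2 by ring]
      obtain ⟨hfin, hcard⟩ := tt_ncard t (a+4) Q.1 Q.2
      have hQ' : IsTromTiling Q.1 (strip (a+4) (3*(t:ℤ)+4-4)) := by
        rw [show (3*(t:ℤ)+4-4) = 3*(t:ℤ) by ring]; exact Q.2
      exact mt_glue_M (by omega) b hQ' hfin hcard⟩

lemma gM_bij (a : ℤ) (t : ℕ) : Function.Bijective (gM a t) := by
  have fin2 : ∀ c : Fin 2, c = 0 ∨ c = 1 := by decide
  constructor
  · rintro (⟨b, Q⟩ | ⟨b, Q⟩) (⟨b', Q'⟩ | ⟨b', Q'⟩) hEq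
    · -- inl / inl
      have E : blockT a b ∪ Q.1 = blockT a b' ∪ Q'.1 := congrArg Subtype.val hEq
      have hQu := Q.2.2.1
      have hQu' := Q'.2.2.1
      have hbb : b = b' := by
        rcases fin2 b with rfl | rfl <;> rcases fin2 b' with rfl | rfl <;> first
          | rfl
          | (exfalso
             first
              | (have h0 : l1 a ∈ blockT a (0:Fin 2) ∪ Q.1 := Or.inl (by simp [blockT])
                 rw [E] at h0
                 have h1' : l1 a ∈ blockT a (1:Fin 2) :=
                   mem_union_resolve_low h0 hQu' ⟨((1:ℤ), a), by simp [l1], by omega⟩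
                 simp only [blockT, reduceIte, Set.mem_insert_iff,
                   Set.mem_singleton_iff] at h1'
                 rcases h1' with h' | h'
                 · exact (ne_piece ((1:ℤ), a+1) (by simp [l1]) (by
                     simp only [l2, Set.mem_insert_iff, Set.mem_singleton_iff, Prod.mk.injEq]
                     omega)) h'
                 · exact (ne_piece ((1:ℤ), a) (by simp [l1]) (by
                     simp only [l3, Set.mem_insert_iff, Set.mem_singleton_iff, Prod.mk.injEq]
                     omega)) h')
              | (have h0 : l2 a ∈ blockT a (1:Fin 2) ∪ Q.1 := Or.inl (by simp [blockT])
                 rw [E] at h0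
                 have h1' : l2 a ∈ blockT a (0:Fin 2) :=
                   mem_union_resolve_low h0 hQu' ⟨((1:ℤ), a), by simp [l2], by omega⟩
                 simp only [blockT, reduceIte, Set.mem_insert_iff,
                   Set.mem_singleton_iff] at h1'
                 rcases h1' with h' | h'
                 · exact (ne_piece ((2:ℤ), a+1) (by simp [l2]) (by
                     simp only [l1, Set.mem_insert_iff, Set.mem_singleton_iff, Prod.mk.injEq]
                     omega)) h'
                 · exact (ne_piece ((1:ℤ), a) (by simp [l2]) (by
                     simp only [l4, Set.mem_insert_iff, Set.mem_singleton_iff, Prod.mk.injEq]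
                     omega)) h'))
      subst hbb
      have hQQ' : Q.1 = Q'.1 := by
        refine union_eq_cancel E ?_ ?_
        · intro p hp hpB
          obtain ⟨c, hc, hlt⟩ := blockT_low a b p hpB
          have := pieces_high hQu p hp c hc
          omega
        · intro p hp hpB
          obtain ⟨c, hc, hlt⟩ := blockT_low a b p hpB
          have := pieces_high hQu' p hp c hc
          omega
      exact congrArg Sum.inl (Prod.ext rfl (Subtype.ext hQQ'))
    · -- inl / inr : impossible
      exfalso
      have E : blockT a b ∪ Q.1 = blockM a b' ∪ Q'.1 := congrArg Subtype.val hEq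
      obtain ⟨d, hdB, hdd, c, hc, hlt⟩ := blockM_dom a b'
      have hd0 : d ∈ blockT a b ∪ Q.1 := by rw [E]; exact Or.inl hdB
      rcases hd0 with hd0 | hd0
      · exact hdom_not_trom hdd (blockT_trom d hd0)
      · have := pieces_high Q.2.2.1 d hd0 c hc
        omega
    · -- inr / inl : impossible
      exfalso
      have E : blockM a b ∪ Q.1 = blockT a b' ∪ Q'.1 := congrArg Subtype.val hEq
      obtain ⟨d, hdB, hdd, c, hc, hlt⟩ := blockM_dom a b
      have hd0 : d ∈ blockT a b' ∪ Q'.1 := by rw [← E]; exact Or.inl hdB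
      rcases hd0 with hd0 | hd0
      · exact hdom_not_trom hdd (blockT_trom d hd0)
      · have := pieces_high Q'.2.2.1 d hd0 c hc
        omega
    · -- inr / inr
      have E : blockM a b ∪ Q.1 = blockM a b' ∪ Q'.1 := congrArg Subtype.val hEq
      have hQu := Q.2.2.2
      have hQu' := Q'.2.2.2
      have hbb : b = b' := by
        rcases fin2 b with rfl | rfl <;> rcases fin2 b' with rfl | rfl <;> first
          | rfl
          | (exfalso
             first
              | (have h0 : h1 (a+1) ∈ blockM a (0:Fin 2) ∪ Q.1 := Or.inl (by simp [blockM])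
                 rw [E] at h0
                 have h1' : h1 (a+1) ∈ blockM a (1:Fin 2) :=
                   mem_union_resolve_low h0 hQu' ⟨((1:ℤ), a+1), by simp [h1], by omega⟩
                 simp only [blockM, reduceIte, Set.mem_insert_iff,
                   Set.mem_singleton_iff] at h1'
                 rcases h1' with h' | h' | h'
                 · exact (ne_piece ((1:ℤ), a+2) (by simp [h1]; omega) (by
                     simp only [l1, Set.mem_insert_iff, Set.mem_singleton_iff, Prod.mk.injEq]
                     omega)) h'
                 · exact (ne_piece ((1:ℤ), a+1) (by simp [h1]) (by
                     simp only [h2, Set.mem_insert_iff, Set.mem_singleton_iff, Prod.mk.injEq]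
                     omega)) h'
                 · exact (ne_piece ((1:ℤ), a+1) (by simp [h1]) (by
                     simp only [l3, Set.mem_insert_iff, Set.mem_singleton_iff, Prod.mk.injEq]
                     omega)) h')
              | (have h0 : h2 (a+1) ∈ blockM a (1:Fin 2) ∪ Q.1 := Or.inl (by simp [blockM])
                 rw [E] at h0
                 have h1' : h2 (a+1) ∈ blockM a (0:Fin 2) :=
                   mem_union_resolve_low h0 hQu' ⟨((2:ℤ), a+1), by simp [h2], by omega⟩
                 simp only [blockM, reduceIte, Set.mem_insert_iff,
                   Set.mem_singleton_iff] at h1'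
                 rcases h1' with h' | h' | h'
                 · exact (ne_piece ((2:ℤ), a+2) (by simp [h2]; omega) (by
                     simp only [l2, Set.mem_insert_iff, Set.mem_singleton_iff, Prod.mk.injEq]
                     omega)) h'
                 · exact (ne_piece ((2:ℤ), a+1) (by simp [h2]) (by
                     simp only [h1, Set.mem_insert_iff, Set.mem_singleton_iff, Prod.mk.injEq]
                     omega)) h'
                 · exact (ne_piece ((2:ℤ), a+1) (by simp [h2]) (by
                     simp only [l4, Set.mem_insert_iff, Set.mem_singleton_iff, Prod.mk.injEq]
                     omega)) h'))
      subst hbb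
      have hQQ' : Q.1 = Q'.1 := by
        refine union_eq_cancel E ?_ ?_
        · intro p hp hpB
          obtain ⟨c, hc, hlt⟩ := blockM_low a b p hpB
          have := pieces_high hQu p hp c hc
          omega
        · intro p hp hpB
          obtain ⟨c, hc, hlt⟩ := blockM_low a b p hpB
          have := pieces_high hQu' p hp c hc
          omega
      exact congrArg Sum.inr (Prod.ext rfl (Subtype.ext hQQ'))
  · rintro ⟨P, hP⟩
    rw [show (3*(((t+1:ℕ)):ℤ)+1) = 3*(t:ℤ)+4 by push_cast; ring,
      show 2*(t+1) = 2*t+2 by ring] at hP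
    obtain ⟨hd, hu, hshape, hdom1, htrom⟩ := hP
    rcases mt_peel (by omega) hd hu hshape hdom1 with ⟨b, hB⟩ | ⟨b, hB⟩
    · obtain ⟨x, y, hxy, hBe⟩ := blockT_eq_pair a b
      have hx : x ∈ P := hB (by rw [hBe]; simp)
      have hy : y ∈ P := hB (by rw [hBe]; simp)
      have hrem := rem_mixed hd hu hshape hdom1 htrom hx hy hxy
        (blockT_trom x (by rw [hBe]; simp)) (blockT_trom y (by rw [hBe]; simp))
        (by rw [← hBe]; exact blockT_sUnion a b)
      rw [← hBe] at hrem
      rw [show (3*(t:ℤ)+4-3) = 3*(t:ℤ)+1 by ring] at hrem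
      exact ⟨Sum.inl (b, ⟨P \ blockT a b, hrem⟩), Subtype.ext (Set.union_diff_cancel hB)⟩
    · obtain ⟨x, d, y, hBe, htx, hdd, hty, hxd, hxy, hdy⟩ := blockM_parts (a := a) b
      have hx : x ∈ P := hB (by rw [hBe]; simp)
      have hdP : d ∈ P := hB (by rw [hBe]; simp)
      have hy : y ∈ P := hB (by rw [hBe]; simp)
      have hrem := rem_trom hd hu hshape hdom1 hx hdP hy hdd
        (by rw [← hBe]; exact blockM_sUnion a b)
      rw [← hBe] at hrem
      rw [show (3*(t:ℤ)+4-4) = 3*(t:ℤ) by ring] at hrem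
      exact ⟨Sum.inr (b, ⟨P \ blockM a b, hrem⟩), Subtype.ext (Set.union_diff_cancel hB)⟩

lemma mt_count (t : ℕ) : ∀ a : ℤ, Nat.card (MTt a t) = t * 2^t ∧ Finite (MTt a t) := by
  induction t with
  | zero =>
    intro a
    haveI := mt_zero_empty a
    exact ⟨by simp [Nat.card_of_isEmpty], Finite.of_subsingleton⟩
  | succ t ih =>
    intro a
    haveI : Finite (MTt (a+3) t) := (ih (a+3)).2
    haveI : Finite (TTt (a+4) t) := (tt_count t (a+4)).2
    have hcard := Nat.card_eq_of_bijective (gM a t) (gM_bij a t)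
    constructor
    · rw [← hcard, Nat.card_sum, Nat.card_prod, Nat.card_prod, (ih (a+3)).1,
        (tt_count t (a+4)).1, Nat.card_eq_fintype_card, Fintype.card_fin]
      ring
    · exact Finite.of_surjective (gM a t) (gM_bij a t).2


/-- The number of partitions of R(2,3t+1) into 2t L-trominoes and one horizontal domino. -/
theorem count_horizontal_domino_deficient (t : ℕ) (ht : 1 ≤ t) :
    Nat.card {P : Set (Set Cell) //
      IsMixedTiling P (rect 2 (3 * (t : ℤ) + 1)) IsHDomino (2 * t)} = t * 2 ^ t := by
  have h := (mt_count t 1).1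
  have hr : rect 2 (3*(t:ℤ)+1) = strip 1 (3*(t:ℤ)+1) := by
    ext ⟨x, y⟩; simp [rect, strip] <;> omega
  rw [hr]
  exact h
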